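/- Let n ∈ ℕ, t, λ ∈ ℂ, and let p be a monic polynomial of degree n over ℂ satisfying p''(x) + (2x² + t)·p'(x) − 2n·x·p(x) = λ·p(x) for all x ∈ ℂ. Suppose there exists a polynomial r over ℂ with r''(x) + (2x² + t)·r'(x) − 2n·x·r(x) − λ·r(x) = p(x) for all x ∈ ℂ (a polynomial generalized eigenvector, i.e. λ is a repeated eigenvalue). Then, with F(x) := p(x)·exp(θ(x;t)), the ray integrals I_k(F²) for k ∈ {1,3,5} converge and are all equal: I₁(F²) = I₃(F²) = I₅(F²). Equivalently, both wedge-contour integrals ∫_γ F(x)² dx = 0 and ∫_γ̃ F(x)² dx = 0 vanish. -/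

import Mathlib

open MeasureTheory Filter Set Polynomial Complex

/-- Direction at infinity of argument kπ/3. -/
noncomputable def rayDir (k : ℕ) : ℂ := Complex.exp ((k : ℂ) * Real.pi * Complex.I / 3)

/-- Ray integral I_k(f) = ω_k · ∫₀^∞ f(r·ω_k) dr. -/
noncomputable def rayIntegral (k : ℕ) (f : ℂ → ℂ) : ℂ :=
  rayDir k * ∫ r in Set.Ioi (0 : ℝ), f ((r : ℂ) * rayDir k)

lemma rayDir_cube {k : ℕ} (hk : Odd k) : rayDir k ^ 3 = -1 := by
  have h1 : rayDir k ^ 3 = Complex.exp ((k : ℂ) * (Real.pi * Complex.I)) := by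
    rw [rayDir, ← Complex.exp_nat_mul]
    ring_nf
  rw [h1, Complex.exp_nat_mul, Complex.exp_pi_mul_I, hk.neg_one_pow]

lemma rayDir_norm (k : ℕ) : ‖rayDir k‖ = 1 := by
  have : (k : ℂ) * Real.pi * Complex.I / 3 = ((k * Real.pi / 3 : ℝ) : ℂ) * Complex.I := by
    push_cast; ring
  rw [rayDir, this, Complex.norm_exp_ofReal_mul_I]

/-- Eventual exponential bound for the decaying integrand along a ray. -/
lemma decay_bound (a : Polynomial ℂ) (c w : ℂ) (hw : ‖w‖ = 1) (hw3 : w ^ 3 = -1) :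
    ∃ C : ℝ, ∀ᶠ s : ℝ in atTop,
      ‖a.eval ((s : ℂ) * w) * Complex.exp (2 * ((s : ℂ) * w) ^ 3 / 3 + c * ((s : ℂ) * w))‖
        ≤ C * Real.exp (-s) := by
  classical
  set d := a.natDegree with hd
  set C : ℝ := ∑ i ∈ Finset.range (d + 1), ‖a.coeff i‖ with hC
  have hC0 : 0 ≤ C := Finset.sum_nonneg fun i _ => norm_nonneg _
  refine ⟨C, ?_⟩
  set e : ℝ := (c * w).re with he
  have hpow := Real.tendsto_pow_mul_exp_neg_atTop_nhds_zero d
  have hev1 : ∀ᶠ s : ℝ in atTop, s ^ d * Real.exp (-s) ≤ 1 :=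
    hpow.eventually (eventually_le_nhds one_pos)
  filter_upwards [hev1, eventually_ge_atTop (1 : ℝ),
      eventually_ge_atTop (max 1 (3 * (e + 2) / 2))] with s hs1 hs2 hs3
  have hs0 : (0 : ℝ) ≤ s := le_trans zero_le_one hs2
  -- norm of the exponential factor
  have hzre : (2 * ((s : ℂ) * w) ^ 3 / 3 + c * ((s : ℂ) * w)).re = -2 * s ^ 3 / 3 + s * e := by
    have : 2 * ((s : ℂ) * w) ^ 3 / 3 + c * ((s : ℂ) * w)
        = ((-2 * s ^ 3 / 3 : ℝ) : ℂ) + (s : ℝ) * (c * w) := by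
      rw [mul_pow, hw3]; push_cast; ring
    rw [this, Complex.add_re, Complex.ofReal_re, Complex.re_ofReal_mul]
  have hexp : ‖Complex.exp (2 * ((s : ℂ) * w) ^ 3 / 3 + c * ((s : ℂ) * w))‖
      = Real.exp (-2 * s ^ 3 / 3 + s * e) := by
    rw [Complex.norm_exp, hzre]
  -- norm of the polynomial factor
  have hz : ‖(s : ℂ) * w‖ = s := by
    rw [norm_mul, hw, Complex.norm_real, Real.norm_of_nonneg hs0, mul_one]
  have hpolybd : ‖a.eval ((s : ℂ) * w)‖ ≤ C * s ^ d := by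
    rw [Polynomial.eval_eq_sum_range]
    calc ‖∑ i ∈ Finset.range (d + 1), a.coeff i * ((s : ℂ) * w) ^ i‖
        ≤ ∑ i ∈ Finset.range (d + 1), ‖a.coeff i * ((s : ℂ) * w) ^ i‖ := norm_sum_le _ _
      _ ≤ ∑ i ∈ Finset.range (d + 1), ‖a.coeff i‖ * s ^ d := by
          refine Finset.sum_le_sum fun i hi => ?_
          rw [norm_mul, norm_pow, hz]
          refine mul_le_mul_of_nonneg_left ?_ (norm_nonneg _)
          exact pow_le_pow_right₀ hs2 (Nat.lt_succ_iff.mp (Finset.mem_range.mp hi))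
      _ = C * s ^ d := by rw [← Finset.sum_mul]
  rw [norm_mul, hexp]
  have key : s ^ d * Real.exp (-2 * s ^ 3 / 3 + s * e) ≤ Real.exp (-s) := by
    have hsplit : s ^ d * Real.exp (-2 * s ^ 3 / 3 + s * e)
        = (s ^ d * Real.exp (-s)) * Real.exp (-2 * s ^ 3 / 3 + s * e + s) := by
      rw [mul_assoc, ← Real.exp_add]; ring_nf
    rw [hsplit]
    have h2 : Real.exp (-2 * s ^ 3 / 3 + s * e + s) ≤ Real.exp (-s) := by
      apply Real.exp_le_exp.mpr
      have hse : s ≥ 3 * (e + 2) / 2 := le_trans (le_max_right _ _) hs3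
      nlinarith [sq_nonneg s, sq_nonneg (s - 1)]
    calc (s ^ d * Real.exp (-s)) * Real.exp (-2 * s ^ 3 / 3 + s * e + s)
        ≤ 1 * Real.exp (-s) := by
          apply mul_le_mul hs1 h2 (Real.exp_pos _).le zero_le_one
      _ = Real.exp (-s) := one_mul _
  calc ‖a.eval ((s : ℂ) * w)‖ * Real.exp (-2 * s ^ 3 / 3 + s * e)
      ≤ (C * s ^ d) * Real.exp (-2 * s ^ 3 / 3 + s * e) := by
        exact mul_le_mul_of_nonneg_right hpolybd (Real.exp_pos _).le
    _ = C * (s ^ d * Real.exp (-2 * s ^ 3 / 3 + s * e)) := by ring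
    _ ≤ C * Real.exp (-s) := mul_le_mul_of_nonneg_left key hC0

lemma decay_continuous (a : Polynomial ℂ) (c w : ℂ) :
    Continuous (fun s : ℝ => a.eval ((s : ℂ) * w)
      * Complex.exp (2 * ((s : ℂ) * w) ^ 3 / 3 + c * ((s : ℂ) * w))) := by
  have h1 : Continuous fun s : ℝ => (s : ℂ) * w :=
    Complex.continuous_ofReal.mul continuous_const
  exact (a.continuous_aeval.comp h1).mul
    (Complex.continuous_exp.comp (by continuity))

lemma decay_integrableOn (a : Polynomial ℂ) (c w : ℂ) (hw : ‖w‖ = 1) (hw3 : w ^ 3 = -1) :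
    IntegrableOn (fun s : ℝ => a.eval ((s : ℂ) * w)
      * Complex.exp (2 * ((s : ℂ) * w) ^ 3 / 3 + c * ((s : ℂ) * w))) (Set.Ioi 0) := by
  obtain ⟨C, hC⟩ := decay_bound a c w hw hw3
  set g := fun s : ℝ => a.eval ((s : ℂ) * w)
      * Complex.exp (2 * ((s : ℂ) * w) ^ 3 / 3 + c * ((s : ℂ) * w)) with hg
  have hcont := decay_continuous a c w
  have hnorm : IntegrableOn (fun s : ℝ => ‖g s‖) (Set.Ioi 0) := by
    refine integrable_of_isBigO_exp_neg one_pos (hcont.norm.continuousOn) ?_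
    rw [Asymptotics.isBigO_iff]
    refine ⟨C, ?_⟩
    filter_upwards [hC] with s hs
    have h1 : ‖Real.exp (-1 * s)‖ = Real.exp (-s) := by
      rw [neg_one_mul, Real.norm_eq_abs, Real.abs_exp]
    rw [Real.norm_eq_abs, abs_norm, h1]
    exact hs
  exact (integrable_norm_iff (hcont.aestronglyMeasurable.restrict)).mp hnorm

lemma decay_tendsto (a : Polynomial ℂ) (c w : ℂ) (hw : ‖w‖ = 1) (hw3 : w ^ 3 = -1) :
    Tendsto (fun s : ℝ => a.eval ((s : ℂ) * w)
      * Complex.exp (2 * ((s : ℂ) * w) ^ 3 / 3 + c * ((s : ℂ) * w))) atTop (nhds 0) := by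
  obtain ⟨C, hC⟩ := decay_bound a c w hw hw3
  rw [tendsto_zero_iff_norm_tendsto_zero]
  have h0 : Tendsto (fun s : ℝ => C * Real.exp (-s)) atTop (nhds 0) := by
    have := Real.tendsto_exp_neg_atTop_nhds_zero
    simpa using this.const_mul C
  refine squeeze_zero' ?_ hC h0
  filter_upwards with s using norm_nonneg _

lemma hasDerivAt_G (q : Polynomial ℂ) (c z : ℂ) :
    HasDerivAt (fun z : ℂ => q.eval z * Complex.exp (2 * z ^ 3 / 3 + c * z))
      ((q.derivative.eval z + (2 * z ^ 2 + c) * q.eval z)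
        * Complex.exp (2 * z ^ 3 / 3 + c * z)) z := by
  have h1 := q.hasDerivAt z
  have h2 : HasDerivAt (fun z : ℂ => 2 * z ^ 3 / 3 + c * z) (2 * z ^ 2 + c) z := by
    have ha : HasDerivAt (fun z : ℂ => 2 * z ^ 3 / 3) (2 * z ^ 2) z := by
      have := (hasDerivAt_pow 3 z).const_mul (2 / 3 : ℂ)
      convert this.div_const 1 using 1
      · rfl
      · rfl
      · ext y; ring
      · push_cast; ring
    have hb : HasDerivAt (fun z : ℂ => c * z) c z := by
      simpa using (hasDerivAt_id z).const_mul c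
    exact ha.add hb
  have := h1.mul h2.cexp
  convert this using 1
  · rfl
  · rfl
  · rfl
  ring

/-- if λ is a repeated eigenvalue (there is a polynomial generalized
eigenvector r), then the ray integrals of F² = (p·e^θ)² converge and are all equal,
i.e. both wedge-contour integrals of F² vanish. -/
theorem repeated_eigenvalue_gives_vanishing_integrals
    (n : ℕ) (t lam : ℂ) (p : Polynomial ℂ) (hmonic : p.Monic) (hdeg : p.natDegree = n)
    (heq : ∀ x : ℂ, (p.derivative.derivative).eval x
        + (2 * x ^ 2 + t) * p.derivative.eval x
        - 2 * (n : ℂ) * x * p.eval x = lam * p.eval x)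
    (r : Polynomial ℂ)
    (hr : ∀ x : ℂ, (r.derivative.derivative).eval x
        + (2 * x ^ 2 + t) * r.derivative.eval x
        - 2 * (n : ℂ) * x * r.eval x - lam * r.eval x = p.eval x) :
    (∀ k ∈ ({1, 3, 5} : Set ℕ),
      MeasureTheory.IntegrableOn
        (fun s : ℝ => (p.eval ((s : ℂ) * rayDir k)
            * Complex.exp (((s : ℂ) * rayDir k) ^ 3 / 3 + t * ((s : ℂ) * rayDir k) / 2)) ^ 2)
        (Set.Ioi 0)) ∧
    rayIntegral 1 (fun x => (p.eval x * Complex.exp (x ^ 3 / 3 + t * x / 2)) ^ 2)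
      = rayIntegral 3 (fun x => (p.eval x * Complex.exp (x ^ 3 / 3 + t * x / 2)) ^ 2) ∧
    rayIntegral 3 (fun x => (p.eval x * Complex.exp (x ^ 3 / 3 + t * x / 2)) ^ 2)
      = rayIntegral 5 (fun x => (p.eval x * Complex.exp (x ^ 3 / 3 + t * x / 2)) ^ 2) := by
  classical
  -- the Wronskian-type polynomial q with (q e^{2θ})' = p² e^{2θ}
  set q : Polynomial ℂ := p * r.derivative - p.derivative * r with hq
  -- the fundamental pointwise identity
  have hqid : ∀ z : ℂ, q.derivative.eval z + (2 * z ^ 2 + t) * q.eval z = (p.eval z) ^ 2 := by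
    intro z
    have h1 := heq z
    have h2 := hr z
    simp only [hq, Polynomial.derivative_sub, Polynomial.derivative_mul,
      Polynomial.eval_sub, Polynomial.eval_add, Polynomial.eval_mul]
    linear_combination p.eval z * h2 - r.eval z * h1
  -- rewriting F² as (p²) e^{2θ}
  have hsq : ∀ z : ℂ, (p.eval z * Complex.exp (z ^ 3 / 3 + t * z / 2)) ^ 2
      = (p ^ 2).eval z * Complex.exp (2 * z ^ 3 / 3 + t * z) := by
    intro z
    rw [mul_pow, Polynomial.eval_pow, pow_two (Complex.exp _), ← Complex.exp_add]
    ring_nf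
  have hodd : ∀ k ∈ ({1, 3, 5} : Set ℕ), Odd k := by
    intro k hk
    rcases hk with rfl | rfl | rfl <;> decide
  -- main per-ray computation
  have main : ∀ k ∈ ({1, 3, 5} : Set ℕ),
      MeasureTheory.IntegrableOn
        (fun s : ℝ => (p.eval ((s : ℂ) * rayDir k)
            * Complex.exp (((s : ℂ) * rayDir k) ^ 3 / 3 + t * ((s : ℂ) * rayDir k) / 2)) ^ 2)
        (Set.Ioi 0) ∧
      rayIntegral k (fun x => (p.eval x * Complex.exp (x ^ 3 / 3 + t * x / 2)) ^ 2)
        = - q.eval 0 := by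
    intro k hk
    set w := rayDir k with hwdef
    have hw3 : w ^ 3 = -1 := rayDir_cube (hodd k hk)
    have hw1 : ‖w‖ = 1 := rayDir_norm k
    have hint : IntegrableOn (fun s : ℝ => (p ^ 2).eval ((s : ℂ) * w)
        * Complex.exp (2 * ((s : ℂ) * w) ^ 3 / 3 + t * ((s : ℂ) * w))) (Set.Ioi 0) :=
      decay_integrableOn (p ^ 2) t w hw1 hw3
    have hcongr : (fun s : ℝ => (p.eval ((s : ℂ) * w)
        * Complex.exp (((s : ℂ) * w) ^ 3 / 3 + t * ((s : ℂ) * w) / 2)) ^ 2)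
        = fun s : ℝ => (p ^ 2).eval ((s : ℂ) * w)
        * Complex.exp (2 * ((s : ℂ) * w) ^ 3 / 3 + t * ((s : ℂ) * w)) := by
      funext s; exact hsq _
    constructor
    · rw [hcongr]; exact hint
    -- the FTC computation
    · have hderiv : ∀ s : ℝ, HasDerivAt
          (fun s : ℝ => q.eval ((s : ℂ) * w)
            * Complex.exp (2 * ((s : ℂ) * w) ^ 3 / 3 + t * ((s : ℂ) * w)))
          (w * ((p ^ 2).eval ((s : ℂ) * w)
            * Complex.exp (2 * ((s : ℂ) * w) ^ 3 / 3 + t * ((s : ℂ) * w)))) s := by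
        intro s
        have hin : HasDerivAt (fun z : ℂ => z * w) w ((s : ℂ)) := by
          simpa using (hasDerivAt_id ((s : ℂ))).mul_const w
        have hcomp := (hasDerivAt_G q t ((s : ℂ) * w)).comp ((s : ℂ)) hin
        have := hcomp.comp_ofReal
        convert this using 1
        · rfl
        rw [hqid ((s : ℂ) * w), Polynomial.eval_pow]
        ring
      have htend : Tendsto (fun s : ℝ => q.eval ((s : ℂ) * w)
          * Complex.exp (2 * ((s : ℂ) * w) ^ 3 / 3 + t * ((s : ℂ) * w))) atTop (nhds 0) :=
        decay_tendsto q t w hw1 hw3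
      have hint' : IntegrableOn (fun s : ℝ => w * ((p ^ 2).eval ((s : ℂ) * w)
          * Complex.exp (2 * ((s : ℂ) * w) ^ 3 / 3 + t * ((s : ℂ) * w)))) (Set.Ioi 0) :=
        hint.const_mul w
      have hFTC := integral_Ioi_of_hasDerivAt_of_tendsto
        (f := fun s : ℝ => q.eval ((s : ℂ) * w)
            * Complex.exp (2 * ((s : ℂ) * w) ^ 3 / 3 + t * ((s : ℂ) * w)))
        (f' := fun s : ℝ => w * ((p ^ 2).eval ((s : ℂ) * w)
            * Complex.exp (2 * ((s : ℂ) * w) ^ 3 / 3 + t * ((s : ℂ) * w))))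
        ((hderiv 0).continuousAt.continuousWithinAt)
        (fun x _ => hderiv x) hint' htend
      rw [MeasureTheory.integral_const_mul] at hFTC
      have h0 : q.eval ((((0:ℝ)):ℂ) * w)
          * Complex.exp (2 * ((((0:ℝ)):ℂ) * w) ^ 3 / 3 + t * ((((0:ℝ)):ℂ) * w)) = q.eval 0 := by
        norm_num
      simp only [rayIntegral, ← hwdef]
      rw [hcongr, hFTC, h0]
      ring
  obtain ⟨h1i, h1e⟩ := main 1 (by simp)
  obtain ⟨h3i, h3e⟩ := main 3 (by simp)
  obtain ⟨h5i, h5e⟩ := main 5 (by simp)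
  exact ⟨fun k hk => (main k hk).1, by rw [h1e, h3e], by rw [h3e, h5e]⟩
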